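/- Let X ⊆ ℤ^n be c_1-connected, equipped with the Euclidean metric d. Let S,T: X → X with T c_1-continuous (i.e., whenever x and y are c_1-adjacent, T(x) = T(y) or T(x) and T(y) are c_1-adjacent). Suppose there exists β: [0,∞) → [0,1) such that d(S(x),S(y)) ≤ β(d(T(x),T(y)))·d(T(x),T(y)) for all x,y ∈ X. Then S is a constant function. -/
import Mathlib


open Filter Topology

/-- Points of ℤ^n are c₁-adjacent if they differ by exactly 1 in exactly one
coordinate and agree in all other coordinates. -/
def C1Adj {n : ℕ} (x y : Fin n → ℤ) : Prop :=
  ∃ i, (x i - y i).natAbs = 1 ∧ ∀ j, j ≠ i → x j = y j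

/-- A subset of ℤ^n is c₁-connected if any two of its points are joined by a
path in the set whose consecutive points are c₁-adjacent. -/
def C1Connected {n : ℕ} (X : Set (Fin n → ℤ)) : Prop :=
  ∀ x ∈ X, ∀ y ∈ X,
    Relation.ReflTransGen (fun a b => a ∈ X ∧ b ∈ X ∧ C1Adj a b) x y

/-- The Euclidean metric on ℤ^n. -/
noncomputable def euclDist {n : ℕ} (x y : Fin n → ℤ) : ℝ :=
  Real.sqrt (∑ i, ((x i : ℝ) - (y i : ℝ)) ^ 2)

lemma euclDist_nonneg {n : ℕ} (x y : Fin n → ℤ) : 0 ≤ euclDist x y :=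
  Real.sqrt_nonneg _

lemma one_le_euclDist {n : ℕ} {x y : Fin n → ℤ} (h : x ≠ y) : 1 ≤ euclDist x y := by
  obtain ⟨i, hi⟩ : ∃ i, x i ≠ y i := by
    by_contra hc
    push_neg at hc
    exact h (funext hc)
  have h1 : (1 : ℝ) ≤ ((x i : ℝ) - (y i : ℝ)) ^ 2 := by
    have : (1 : ℤ) ≤ |x i - y i| := Int.one_le_abs (sub_ne_zero.mpr hi)
    have h2 : (1 : ℝ) ≤ |((x i : ℝ) - (y i : ℝ))| := by
      rw [show ((x i : ℝ) - (y i : ℝ)) = ((x i - y i : ℤ) : ℝ) by push_cast; ring]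
      rw [← Int.cast_abs]
      exact_mod_cast this
    calc (1:ℝ) = 1^2 := by ring
    _ ≤ |((x i : ℝ) - (y i : ℝ))|^2 := by
        apply pow_le_pow_left₀ (by norm_num) h2
    _ = ((x i : ℝ) - (y i : ℝ))^2 := sq_abs _
  have hsum : (1 : ℝ) ≤ ∑ j, ((x j : ℝ) - (y j : ℝ)) ^ 2 :=
    le_trans h1 (Finset.single_le_sum (f := fun j => ((x j : ℝ) - (y j : ℝ)) ^ 2)
      (fun j _ => sq_nonneg _) (Finset.mem_univ i))
  calc (1:ℝ) = Real.sqrt 1 := (Real.sqrt_one).symm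
  _ ≤ euclDist x y := Real.sqrt_le_sqrt hsum

lemma euclDist_eq_one_of_adj {n : ℕ} {x y : Fin n → ℤ} (h : C1Adj x y) :
    euclDist x y = 1 := by
  obtain ⟨i, hi1, hi2⟩ := h
  have hsum : ∑ j, ((x j : ℝ) - (y j : ℝ)) ^ 2 = 1 := by
    rw [Finset.sum_eq_single i]
    · have : (x i - y i : ℤ) = 1 ∨ (x i - y i : ℤ) = -1 := by omega
      rcases this with h | h <;>
      · rw [show ((x i : ℝ) - (y i : ℝ)) = ((x i - y i : ℤ) : ℝ) by push_cast; ring, h] <;> norm_num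
    · intro j _ hj
      rw [hi2 j hj]; ring
    · intro h; exact absurd (Finset.mem_univ i) h
  rw [euclDist, hsum, Real.sqrt_one]


/-- If (T,S) is a pair of Geraghty contraction maps on a
c₁-connected subset of ℤ^n with the Euclidean metric and T is c₁-continuous,
then S is constant. -/
theorem geraghty_pair_S_constant
    {n : ℕ} (X : Set (Fin n → ℤ)) (hconn : C1Connected X)
    (S T : (Fin n → ℤ) → (Fin n → ℤ))
    (hS : ∀ x ∈ X, S x ∈ X) (hT : ∀ x ∈ X, T x ∈ X)
    (hTc : ∀ x ∈ X, ∀ y ∈ X, C1Adj x y → T x = T y ∨ C1Adj (T x) (T y))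
    (β : ℝ → ℝ) (hβ : ∀ t, 0 ≤ t → 0 ≤ β t ∧ β t < 1)
    (hcontr : ∀ x ∈ X, ∀ y ∈ X,
      euclDist (S x) (S y) ≤ β (euclDist (T x) (T y)) * euclDist (T x) (T y)) :
    ∀ x ∈ X, ∀ y ∈ X, S x = S y := by
  intro x hx y hy
  have key : ∀ a ∈ X, ∀ b ∈ X, C1Adj a b → S a = S b := by
    intro a ha b hb hadj
    have hlt : euclDist (S a) (S b) < 1 := by
      rcases hTc a ha b hb hadj with heq | hadjT
      · have h0 : euclDist (T a) (T b) = 0 := by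
          rw [heq, euclDist]
          simp
        have := hcontr a ha b hb
        rw [h0] at this
        simp at this
        calc euclDist (S a) (S b) ≤ 0 := this
        _ < 1 := by norm_num
      · have h1 : euclDist (T a) (T b) = 1 := euclDist_eq_one_of_adj hadjT
        have := hcontr a ha b hb
        rw [h1] at this
        calc euclDist (S a) (S b) ≤ β 1 * 1 := this
        _ = β 1 := by ring
        _ < 1 := (hβ 1 (by norm_num)).2
    by_contra hne
    exact absurd (one_le_euclDist hne) (not_le.mpr hlt)
  have h := hconn x hx y hy
  clear hy
  induction h with
  | refl => rfl
  | tail _ hbc ih => exact ih.trans (key _ hbc.1 _ hbc.2.1 hbc.2.2)
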